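/- Let π be a group, ρ : π → SL(2,F) an irreducible representation over a field F of characteristic 0 equipped with a non-Archimedean absolute value |·|, with valuation ring R. If the character χ(g) = tr(ρ(g)) satisfies χ(g) ∈ R for all g ∈ π, then the image of ρ is bounded: there exists a bounded R-submodule of Mat(2,F) containing ρ(π). -/

import Mathlib

open Matrix

/-- A `2×2` matrix over a characteristic-zero field whose trace and trace of square
both vanish has vanishing square. -/
lemma sq_eq_zero_of_traces {F : Type*} [Field F] [CharZero F]
    (N : Matrix (Fin 2) (Fin 2) F) (h1 : N.trace = 0) (h2 : (N * N).trace = 0) :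
    N * N = 0 := by
  have ha : N 0 0 + N 1 1 = 0 := by simpa [Matrix.trace_fin_two] using h1
  have h2' : (N 0 0 * N 0 0 + N 0 1 * N 1 0) + (N 1 0 * N 0 1 + N 1 1 * N 1 1) = 0 := by
    simpa [Matrix.trace_fin_two, Matrix.mul_apply, Fin.sum_univ_two] using h2
  have h2'' : (2 : F) * (N 0 0 * N 0 0 + N 0 1 * N 1 0) = 0 := by
    linear_combination h2' - (N 1 1 - N 0 0) * ha
  have hb : N 0 0 * N 0 0 + N 0 1 * N 1 0 = 0 :=
    (mul_eq_zero.mp h2'').resolve_left two_ne_zero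
  ext i j
  fin_cases i <;> fin_cases j <;>
    simp only [Matrix.mul_apply, Fin.sum_univ_two, Matrix.zero_apply, Fin.isValue,
      Fin.mk_zero, Fin.mk_one]
  · linear_combination hb
  · linear_combination (N 0 1) * ha
  · linear_combination (N 1 0) * ha
  · linear_combination hb + (N 1 1 - N 0 0) * ha

/-- If `ρ : π → SL(2,F)` is an irreducible representation over a non-Archimedean valued
field `F` of characteristic `0` with valuation ring `R`, and the character
`χ(g) = tr(ρ(g))` takes values in `R` (i.e. `v (χ g) ≤ 1`), then the image of `ρ` is
bounded: the matrix entries of `ρ(π)` are uniformly bounded in absolute value. -/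
theorem stmt14 (F : Type*) [Field F] [CharZero F] (v : AbsoluteValue F ℝ)
    (hna : IsNonarchimedean (v : F → ℝ)) (π : Type*) [Group π]
    (ρ : π →* Matrix.SpecialLinearGroup (Fin 2) F)
    (hirr : ¬ ∃ w : Fin 2 → F, w ≠ 0 ∧ ∀ g : π, ∃ c : F,
        Matrix.mulVec (ρ g : Matrix (Fin 2) (Fin 2) F) w = c • w)
    (hχ : ∀ g : π, v ((ρ g : Matrix (Fin 2) (Fin 2) F).trace) ≤ 1) :
    ∃ C : ℝ, ∀ g : π, ∀ i j, v ((ρ g : Matrix (Fin 2) (Fin 2) F) i j) ≤ C := by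
  classical
  set Mat := Matrix (Fin 2) (Fin 2) F with hMat
  -- the span of the image of ρ
  set S : Submodule F Mat :=
    Submodule.span F (Set.range fun g : π => (ρ g : Mat)) with hS
  -- orbit lemma: the span of an orbit of a nonzero vector is everything
  have horbit : ∀ u : Fin 2 → F, u ≠ 0 →
      Submodule.span F (Set.range fun g : π => (ρ g : Mat) *ᵥ u) = ⊤ := by
    intro u hu
    by_contra hW
    set W := Submodule.span F (Set.range fun g : π => (ρ g : Mat) *ᵥ u) with hWdef
    have huW : u ∈ W := by
      apply Submodule.subset_span
      exact ⟨1, by simp⟩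
    have hlt : W < ⊤ := lt_top_iff_ne_top.mpr hW
    have h2 : Module.finrank F W < 2 := by
      have := Submodule.finrank_lt (K := F) (V := Fin 2 → F) hlt.ne
      simpa using this
    have hle : (F ∙ u) ≤ W := by rwa [Submodule.span_singleton_le_iff_mem]
    have h1 : Module.finrank F (F ∙ u) = 1 := finrank_span_singleton hu
    have heq : (F ∙ u) = W := Submodule.eq_of_le_of_finrank_le hle (by omega)
    apply hirr
    refine ⟨u, hu, fun g => ?_⟩
    have hmem : (ρ g : Mat) *ᵥ u ∈ (F ∙ u) := by
      rw [heq]; exact Submodule.subset_span ⟨g, rfl⟩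
    obtain ⟨c, hc⟩ := Submodule.mem_span_singleton.mp hmem
    exact ⟨c, hc.symm⟩
  -- the span S is closed under multiplication
  have hmulS : ∀ s ∈ S, ∀ t ∈ S, s * t ∈ S := by
    intro s hs
    induction hs using Submodule.span_induction with
    | mem x hx =>
      intro t ht
      induction ht using Submodule.span_induction with
      | mem y hy =>
        obtain ⟨g, rfl⟩ := hx; obtain ⟨h, rfl⟩ := hy
        exact Submodule.subset_span ⟨g * h, by simp [_root_.map_mul]⟩
      | zero => simpa using Submodule.zero_mem S
      | add y z hy hz ihy ihz => simpa [mul_add] using Submodule.add_mem S ihy ihz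
      | smul a y hy ihy => simpa [mul_smul_comm] using Submodule.smul_mem S a ihy
    | zero => intro t ht; simpa using Submodule.zero_mem S
    | add x y hx hy ihx ihy =>
      intro t ht
      simpa [add_mul] using Submodule.add_mem S (ihx t ht) (ihy t ht)
    | smul a x hx ihx =>
      intro t ht
      simpa [smul_mul_assoc] using Submodule.smul_mem S a (ihx t ht)
  -- extension of trace vanishing to the whole span
  have htr : ∀ B : Mat, (∀ g : π, Matrix.trace ((ρ g : Mat) * B) = 0) →
      ∀ s ∈ S, Matrix.trace (s * B) = 0 := by
    intro B hBtr s hs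
    induction hs using Submodule.span_induction with
    | mem x hx => obtain ⟨g, rfl⟩ := hx; exact hBtr g
    | zero => simp
    | add x y hx hy ihx ihy => rw [add_mul, Matrix.trace_add, ihx, ihy, add_zero]
    | smul a x hx ihx => rw [smul_mul_assoc, Matrix.trace_smul, ihx, smul_zero]
  -- key lemma: the trace form is nondegenerate on S
  have hkey : ∀ B : Mat, B ∈ S → (∀ g : π, Matrix.trace ((ρ g : Mat) * B) = 0) → B = 0 := by
    intro B hBS hBtr
    by_contra hB0
    obtain ⟨i, j, hij⟩ : ∃ i j, B i j ≠ 0 := by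
      by_contra h; push_neg at h
      exact hB0 (by ext i j; exact h i j)
    set u : Fin 2 → F := B *ᵥ Pi.single j 1 with hu
    have hune : u ≠ 0 := by
      intro h
      apply hij
      have := congrFun h i
      simpa [hu] using this
    have hnil : ∀ g : π, ((ρ g : Mat) * B) * ((ρ g : Mat) * B) = 0 := by
      intro g
      apply sq_eq_zero_of_traces
      · exact hBtr g
      · have hsmem : ((ρ g : Mat) * B * (ρ g : Mat)) ∈ S :=
          hmulS _ (hmulS _ (Submodule.subset_span ⟨g, rfl⟩) _ hBS) _
            (Submodule.subset_span ⟨g, rfl⟩)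
        have h0 := htr B hBtr _ hsmem
        rw [← mul_assoc]; exact h0
    have hBgu : ∀ g : π, B *ᵥ ((ρ g : Mat) *ᵥ u) = 0 := by
      intro g
      have h1 : (ρ g : Mat) *ᵥ (B *ᵥ ((ρ g : Mat) *ᵥ u)) = 0 := by
        have h0 : ((ρ g : Mat) * B * ((ρ g : Mat) * B)) *ᵥ (Pi.single j 1) = 0 := by
          rw [hnil g, Matrix.zero_mulVec]
        rw [← Matrix.mulVec_mulVec, ← Matrix.mulVec_mulVec, ← Matrix.mulVec_mulVec] at h0
        simpa [hu] using h0
      have hinv : (ρ g⁻¹ : Mat) * (ρ g : Mat) = 1 := by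
        rw [← Matrix.SpecialLinearGroup.coe_mul, ← _root_.map_mul]
        simp
      have h2 : (ρ g⁻¹ : Mat) *ᵥ ((ρ g : Mat) *ᵥ (B *ᵥ ((ρ g : Mat) *ᵥ u))) = 0 := by
        rw [h1, Matrix.mulVec_zero]
      rw [Matrix.mulVec_mulVec, hinv, Matrix.one_mulVec] at h2
      exact h2
    have hBzero : ∀ x : Fin 2 → F, B *ᵥ x = 0 := by
      intro x
      have hsub : Submodule.span F (Set.range fun g : π => (ρ g : Mat) *ᵥ u) ≤
          LinearMap.ker (Matrix.mulVecLin B) := by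
        rw [Submodule.span_le]
        rintro y ⟨g, rfl⟩
        simpa using hBgu g
      have hx : x ∈ Submodule.span F (Set.range fun g : π => (ρ g : Mat) *ᵥ u) := by
        rw [horbit u hune]; trivial
      simpa using hsub hx
    apply hB0
    ext i' j'
    have := congrFun (hBzero (Pi.single j' 1)) i'
    exact (by simpa using this : B i' j' = 0)
  -- functionals B ↦ tr(ρ(g) B)
  set φ : π → (Mat →ₗ[F] F) :=
    fun g => (Matrix.traceLinearMap (Fin 2) F F).comp (LinearMap.mulLeft F (ρ g : Mat))
    with hφdef
  have hφ : ∀ g (B : Mat), φ g B = Matrix.trace ((ρ g : Mat) * B) := fun g B => rfl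
  -- choose a finite set of group elements whose functionals separate points of S
  set K : Finset π → Submodule F Mat := fun G => S ⊓ ⨅ g ∈ G, LinearMap.ker (φ g) with hK
  have hKmem : ∀ (G' : Finset π) (B : Mat),
      B ∈ K G' ↔ B ∈ S ∧ ∀ g ∈ G', Matrix.trace ((ρ g : Mat) * B) = 0 := by
    intro G' B
    simp [hK, Submodule.mem_inf, Submodule.mem_iInf, LinearMap.mem_ker, hφ]
  have hex : ∃ n, ∃ G : Finset π, Module.finrank F (K G) = n := ⟨_, ∅, rfl⟩
  obtain ⟨G, hG⟩ := Nat.find_spec hex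
  have hKbot : K G = ⊥ := by
    by_contra hne
    obtain ⟨B, hBK, hB0⟩ := Submodule.ne_bot_iff _ |>.mp hne
    have hBS : B ∈ S := ((hKmem G B).mp hBK).1
    obtain ⟨g, hg⟩ : ∃ g : π, Matrix.trace ((ρ g : Mat) * B) ≠ 0 := by
      by_contra h; push_neg at h
      exact hB0 (hkey B hBS h)
    have hle : K (Insert.insert g G) ≤ K G := by
      refine inf_le_inf_left _ ?_
      exact biInf_mono fun x hx => Finset.mem_insert_of_mem hx
    have hlt : K (Insert.insert g G) < K G := by
      refine hle.lt_of_ne fun h => hg ?_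
      have hBK' : B ∈ K (Insert.insert g G) := h ▸ hBK
      exact ((hKmem _ B).mp hBK').2 g (Finset.mem_insert_self g G)
    have hdrop := Submodule.finrank_lt_finrank_of_lt hlt
    have hmin : Nat.find hex ≤ Module.finrank F (K (Insert.insert g G)) :=
      Nat.find_le ⟨Insert.insert g G, rfl⟩
    omega
  have hsep : ∀ B : Mat, B ∈ S → (∀ g ∈ G, Matrix.trace ((ρ g : Mat) * B) = 0) → B = 0 := by
    intro B hBS h
    have : B ∈ K G := (hKmem G B).mpr ⟨hBS, h⟩
    rw [hKbot] at this
    simpa using this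
  -- build the left inverse
  set L : Mat →ₗ[F] (↥G → F) := LinearMap.pi (fun g : ↥G => φ g) with hL
  set Lres : ↥S →ₗ[F] (↥G → F) := L.domRestrict S with hLres
  have hker : LinearMap.ker Lres = ⊥ := by
    rw [LinearMap.ker_eq_bot']
    intro b hb
    have hb0 : (b : Mat) = 0 := by
      refine hsep b b.2 fun g hg => ?_
      have := congrFun hb ⟨g, hg⟩
      simpa [hLres, hL, hφ] using this
    exact Subtype.ext hb0
  obtain ⟨r, hr⟩ := Lres.exists_leftInverse_of_injective hker
  set X : ↥G → Mat := fun g => ((r (Pi.single g (1 : F) : ↥G → F) : ↥S) : Mat) with hX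
  refine ⟨∑ g : ↥G, ∑ i : Fin 2, ∑ j : Fin 2, v (X g i j), ?_⟩
  intro u i j
  set b : ↥S := ⟨(ρ u : Mat), Submodule.subset_span ⟨u, rfl⟩⟩ with hbdef
  have hrb : r (Lres b) = b := by
    have := LinearMap.ext_iff.mp hr b
    simpa using this
  set c : ↥G → F := fun g => Matrix.trace ((ρ (g : π) : Mat) * (ρ u : Mat)) with hc
  have hLb : Lres b = ∑ g : ↥G, c g • (Pi.single g (1 : F) : ↥G → F) := by
    ext g'
    rw [Finset.sum_apply]
    simp only [Pi.smul_apply, Pi.single_apply, smul_eq_mul, mul_ite, mul_one, mul_zero]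
    rw [Finset.sum_ite_eq Finset.univ g' c]
    simp [hLres, hL, hφ, hc, hbdef]
  have hdecomp : (ρ u : Mat) = ∑ g : ↥G, c g • X g := by
    have hb' : b = ∑ g : ↥G, c g • r (Pi.single g (1 : F) : ↥G → F) := by
      rw [← hrb, hLb, map_sum]
      simp_rw [_root_.map_smul]
    calc (ρ u : Mat) = ((b : ↥S) : Mat) := rfl
      _ = ∑ g : ↥G, c g • X g := by
          rw [hb']
          push_cast
          rfl
  have hentry : (ρ u : Mat) i j = ∑ g : ↥G, c g * X g i j := by
    rw [hdecomp, Matrix.sum_apply]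
    exact Finset.sum_congr rfl fun g _ => rfl
  have hcle : ∀ g : ↥G, v (c g) ≤ 1 := by
    intro g
    have := hχ ((g : π) * u)
    simpa [hc, _root_.map_mul] using this
  calc v ((ρ u : Mat) i j) = v (∑ g : ↥G, c g * X g i j) := by rw [hentry]
    _ ≤ ∑ g : ↥G, v (c g * X g i j) := v.sum_le _ _
    _ = ∑ g : ↥G, v (c g) * v (X g i j) := by simp [_root_.map_mul]
    _ ≤ ∑ g : ↥G, v (X g i j) := by
        refine Finset.sum_le_sum fun g _ => ?_
        exact mul_le_of_le_one_left (v.nonneg _) (hcle g)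
    _ ≤ ∑ g : ↥G, ∑ i' : Fin 2, ∑ j' : Fin 2, v (X g i' j') := by
        refine Finset.sum_le_sum fun g _ => ?_
        have h1 : v (X g i j) ≤ ∑ j' : Fin 2, v (X g i j') :=
          Finset.single_le_sum (fun _ _ => v.nonneg _) (Finset.mem_univ j)
        have h2 : (∑ j' : Fin 2, v (X g i j')) ≤ ∑ i' : Fin 2, ∑ j' : Fin 2, v (X g i' j') :=
          Finset.single_le_sum (f := fun i' => ∑ j' : Fin 2, v (X g i' j'))
            (fun _ _ => Finset.sum_nonneg fun _ _ => v.nonneg _) (Finset.mem_univ i)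
        exact h1.trans h2
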